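/- For every locally eventually constant sequence (g_n)_n ∈ 𝒢, the stabilization (ω_n)_n = ←(g_n)_n belongs to Ω and satisfies ω'_n = g_n for all n. Consequently, stabilization (g_n)_n ↦ ←(g_n)_n from 𝒢 to ←𝒢 and termwise reduction (ω_n)_n ↦ (ω'_n)_n from ←𝒢 to 𝒢 are mutually inverse bijections. -/

import Mathlib

open Classical
noncomputable section

namespace GCG

/-- One-step backtrack reduction of a word: replace some substring `u v u` by `u`. -/
def ReduceStep {V : Type*} (l r : List V) : Prop :=
  ∃ (p s : List V) (u v : V), l = p ++ [u, v, u] ++ s ∧ r = p ++ [u] ++ s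

/-- A word is reduced if it admits no one-step reduction. -/
def IsReduced {V : Type*} (l : List V) : Prop := ∀ r, ¬ ReduceStep l r

/-- The reduction `ω'` of a word: the (for words in a simple graph, unique) reduced
word obtained from it by repeatedly replacing substrings `u v u` by `u`. -/
def reduce {V : Type*} (l : List V) : List V :=
  if h : ∃ r, Relation.ReflTransGen ReduceStep l r ∧ IsReduced r then h.choose else l

/-- Compress every maximal constant substring `u u ⋯ u` to the single letter `u`. -/
def compress {V : Type*} : List V → List V
  | [] => []
  | [a] => [a]
  | a :: b :: t => if a = b then compress (b :: t) else a :: compress (b :: t)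

/-- Delete–Replace–Compress along `f`: delete the letters sent into `S`
(the subdivision points), replace the remaining letters by their images,
and compress maximal constant substrings. -/
def DRC {V' V S : Type*} (f : V' → V ⊕ S) (w : List V') : List V :=
  compress (w.filterMap fun v => (f v).getLeft?)

/-- A word in a simple graph: a finite list of vertices in which consecutive
letters are distinct and joined by an edge. -/
def IsWord {V : Type*} (G : SimpleGraph V) (l : List V) : Prop := l.Chain' G.Adj

/-- A loop word at `x`: a word that starts and ends with `x`. -/
def IsLoopWord {V : Type*} (G : SimpleGraph V) (x : V) (l : List V) : Prop :=
  l.Chain' G.Adj ∧ l.head? = some x ∧ l.getLast? = some x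

/-- Concatenation of loop words: the duplicated base letter is dropped. -/
def lconcat {V : Type*} (ω ξ : List V) : List V := ω.dropLast ++ ξ

/-- `Gs` (on vertex set `V ⊕ S`) is the subdivision of `G` in which every edge is
evenly subdivided into `d` edges: every edge of `G` is replaced by a path of
length `d` through fresh interior vertices from `S`, these paths are compatible
with edge reversal, their interiors are pairwise disjoint, they exhaust `S`, and
their steps are exactly the edges of `Gs`. -/
def IsEvenSubdivision {V S : Type*} (G : SimpleGraph V) (d : ℕ)
    (Gs : SimpleGraph (V ⊕ S)) : Prop :=
  ∃ P : G.Dart → Fin (d + 1) → V ⊕ S,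
    (∀ e, P e 0 = Sum.inl e.toProd.1) ∧
    (∀ e, P e (Fin.last d) = Sum.inl e.toProd.2) ∧
    (∀ e (i : Fin (d + 1)), 0 < i.val → i.val < d → ∃ s : S, P e i = Sum.inr s) ∧
    (∀ e, Function.Injective (P e)) ∧
    (∀ e (i : Fin (d + 1)), P e.symm i = P e i.rev) ∧
    (∀ s : S, ∃ e i, P e i = Sum.inr s) ∧
    (∀ e e' (i i' : Fin (d + 1)), 0 < i.val → i.val < d → P e i = P e' i' →
      (e' = e ∧ i' = i) ∨ (e' = e.symm ∧ i' = i.rev)) ∧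
    (∀ a b, Gs.Adj a b ↔ ∃ e, ∃ i : Fin d, P e i.castSucc = a ∧ P e i.succ = b)

/-- The inverse sequence of finite connected simple graphs `X_n` with even
subdivisions `X*_n` and simplicial bonding surjections `f_n : X_{n+1} → X*_n`
mapping every edge onto an edge, together with coherent base vertices `x_n`. -/
structure GraphTower where
  V : ℕ → Type
  S : ℕ → Type
  finV : ∀ n, Finite (V n)
  G : ∀ n, SimpleGraph (V n)
  conn : ∀ n, (G n).Connected
  d : ℕ → ℕ
  two_le_d : ∀ n, 2 ≤ d n
  Gs : ∀ n, SimpleGraph (V n ⊕ S n)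
  subdiv : ∀ n, IsEvenSubdivision (G n) (d n) (Gs n)
  f : ∀ n, V (n + 1) → V n ⊕ S n
  f_surj : ∀ n, Function.Surjective (f n)
  f_simplicial : ∀ n ⦃u v⦄, (G (n + 1)).Adj u v → (Gs n).Adj (f n u) (f n v)
  f_edge_surj : ∀ n ⦃a b⦄, (Gs n).Adj a b →
    ∃ u v, (G (n + 1)).Adj u v ∧ f n u = a ∧ f n v = b
  x : ∀ n, V n
  f_base : ∀ n, f n (x (n + 1)) = Sum.inl (x n)

namespace GraphTower

/-- The projection `φ_n = DRC_n`. -/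
def phi (T : GraphTower) (n : ℕ) : List (T.V (n + 1)) → List (T.V n) := DRC (T.f n)

/-- The composite projection `φ_n ∘ φ_{n+1} ∘ ⋯ ∘ φ_{n+m-1}` (the identity for `m = 0`). -/
def proj (T : GraphTower) (n : ℕ) : (m : ℕ) → List (T.V (n + m)) → List (T.V n)
  | 0, w => w
  | m + 1, w => T.proj n m (T.phi (n + m) w)

/-- Membership in `Ω = lim←(Ω_n, φ_n)`: a coherent sequence of loop words. -/
def MemOmega (T : GraphTower) (ω : ∀ n, List (T.V n)) : Prop :=
  (∀ n, IsLoopWord (T.G n) (T.x n) (ω n)) ∧ ∀ n, T.phi n (ω (n + 1)) = ω n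

/-- Membership in `G = lim←(Ω'_n, φ'_n)`: a `φ'`-coherent sequence of reduced loop words. -/
def MemG (T : GraphTower) (g : ∀ n, List (T.V n)) : Prop :=
  (∀ n, IsLoopWord (T.G n) (T.x n) (g n) ∧ IsReduced (g n)) ∧
    ∀ n, reduce (T.phi n (g (n + 1))) = g n

/-- A sequence is locally eventually constant if for every fixed level `n` the
unreduced projections of its later terms to level `n` are eventually constant. -/
def LEC (T : GraphTower) (g : ∀ n, List (T.V n)) : Prop :=
  ∀ n, ∃ M, ∀ m, M ≤ m → T.proj n m (g (n + m)) = T.proj n M (g (n + M))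

/-- `ω` is the stabilization `←g` of `g`: for every level `n`, the projections of
the later terms of `g` to level `n` eventually equal `ω n`. -/
def IsStabilization (T : GraphTower) (g ω : ∀ n, List (T.V n)) : Prop :=
  ∀ n, ∃ M, ∀ m, M ≤ m → T.proj n m (g (n + m)) = ω n

/-- The identity word sequence `(x_n)_n`. -/
def seqOne (T : GraphTower) : ∀ n, List (T.V n) := fun n => [T.x n]

/-- Termwise concatenation followed by termwise reduction. -/
def seqMul (T : GraphTower) (g h : ∀ n, List (T.V n)) : ∀ n, List (T.V n) :=
  fun n => reduce (lconcat (g n) (h n))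

/-- Termwise reversal. -/
def seqInv (T : GraphTower) (g : ∀ n, List (T.V n)) : ∀ n, List (T.V n) :=
  fun n => (g n).reverse

/-- Membership in `←𝒢`: the stabilization of some locally eventually constant
element of `G`. -/
def MemSG (T : GraphTower) (ω : ∀ n, List (T.V n)) : Prop :=
  ∃ g, T.MemG g ∧ T.LEC g ∧ T.IsStabilization g ω

/-- `τ = ω ∗ ξ`: termwise concatenation, followed by termwise reduction,
followed by stabilization. -/
def star (T : GraphTower) (ω ξ τ : ∀ n, List (T.V n)) : Prop :=
  T.IsStabilization (fun n => reduce (lconcat (ω n) (ξ n))) τ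

end GraphTower

end GCG

namespace GCG


section Aux

variable {V : Type*}

variable {V : Type*}

theorem List.chain'_nil {α : Type*} {R : α → α → Prop} : List.Chain' R [] := List.isChain_nil

@[simp] theorem List.chain'_nil' {α : Type*} {R : α → α → Prop} : List.Chain' R [] := List.isChain_nil

theorem List.chain'_cons {α : Type*} {R : α → α → Prop} {a b : α} {l : List α} :
    List.Chain' R (a :: b :: l) ↔ R a b ∧ List.Chain' R (b :: l) := List.isChain_cons_cons

theorem List.chain'_cons' {α : Type*} {R : α → α → Prop} {x : α} {l : List α} :
    List.Chain' R (x :: l) ↔ (∀ y ∈ l.head?, R x y) ∧ List.Chain' R l := List.isChain_cons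

@[simp] theorem List.chain'_singleton {α : Type*} {R : α → α → Prop} (a : α) : List.Chain' R [a] :=
  List.isChain_singleton a

theorem List.chain'_append {α : Type*} {R : α → α → Prop} {l₁ l₂ : List α} :
    List.Chain' R (l₁ ++ l₂) ↔ List.Chain' R l₁ ∧ List.Chain' R l₂ ∧
      ∀ x ∈ l₁.getLast?, ∀ y ∈ l₂.head?, R x y := List.isChain_append

theorem List.chain'_map_of_chain' {α β : Type*} {R : α → α → Prop} {S : β → β → Prop} (f : α → β)
    (H : ∀ a b : α, R a b → S (f a) (f b)) {l : List α} (p : List.Chain' R l) :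
    List.Chain' S (List.map f l) := List.isChain_map_of_isChain f H p

theorem List.chain'_reverse {α : Type*} {R : α → α → Prop} {l : List α} :
    List.Chain' R l.reverse ↔ List.Chain' (fun a b => R b a) l := List.isChain_reverse

section Compress

theorem compress_cons_cons (a b : V) (t : List V) :
    compress (a :: b :: t) = if a = b then compress (b :: t) else a :: compress (b :: t) := rfl

theorem compress_head? (l : List V) : (compress l).head? = l.head? := by
  induction l with
  | nil => rfl
  | cons a t ih =>
    cases t with
    | nil => rfl
    | cons b t' =>
      rw [compress_cons_cons]
      split
      · next h => subst h; rw [ih]; rfl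
      · rfl

theorem compress_ne_nil {l : List V} (h : l ≠ []) : compress l ≠ [] := by
  intro hc
  have := compress_head? l
  rw [hc] at this
  exact h (List.head?_eq_none_iff.mp this.symm)

theorem compress_getLast? (l : List V) : (compress l).getLast? = l.getLast? := by
  induction l with
  | nil => rfl
  | cons a t ih =>
    cases t with
    | nil => rfl
    | cons b t' =>
      rw [compress_cons_cons]
      split
      · rw [ih]; rfl
      · rw [List.getLast?_cons_cons, ← ih]
        have : compress (b :: t') ≠ [] := compress_ne_nil (by simp)
        cases h : compress (b :: t') with
        | nil => exact absurd h this
        | cons c u => simp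

theorem compress_dup (X Y : List V) (a : V) :
    compress (X ++ a :: a :: Y) = compress (X ++ a :: Y) := by
  induction X with
  | nil => simp [compress_cons_cons]
  | cons x X ih =>
    cases X with
    | nil => simp only [List.nil_append, List.cons_append, compress_cons_cons] at *; rw [ih]
    | cons x' X' =>
      simp only [List.cons_append, compress_cons_cons] at *
      rw [ih]

theorem compress_cons_self (y : V) (Y : List V) :
    compress (y :: Y) = y :: (compress (y :: Y)).tail := by
  have h := compress_head? (y :: Y)
  cases hc : compress (y :: Y) with
  | nil => exact absurd hc (compress_ne_nil (by simp))
  | cons c u => rw [hc] at h; simp at h; simp [h]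

theorem compress_split (X Y : List V) (y : V) :
    compress (X ++ y :: Y) = compress (X ++ [y]) ++ (compress (y :: Y)).tail := by
  induction X with
  | nil =>
    simp only [List.nil_append]
    conv_lhs => rw [compress_cons_self y Y]
    rfl
  | cons x X ih =>
    cases X with
    | nil =>
      simp only [List.nil_append, List.cons_append, compress_cons_cons]
      split
      · next h =>
        subst h
        rw [show compress [x] = [x] from rfl]
        conv_lhs => rw [compress_cons_self x Y]
        rfl
      · rw [show compress [y] = [y] from rfl]
        conv_lhs => rw [compress_cons_self y Y]
        rfl
    | cons x' X' =>
      simp only [List.cons_append, compress_cons_cons] at *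
      rw [ih]
      split <;> rfl

theorem compress_chain {R : V → V → Prop} {l : List V}
    (h : l.Chain' (fun a b => a = b ∨ R a b)) : (compress l).Chain' R := by
  induction l with
  | nil => exact List.chain'_nil
  | cons a t ih =>
    cases t with
    | nil => simp [compress]
    | cons b t' =>
      rw [List.chain'_cons] at h
      rw [compress_cons_cons]
      split
      · exact ih h.2
      · next hne =>
        have hR : R a b := h.1.resolve_left hne
        rw [List.chain'_cons']
        refine ⟨?_, ih h.2⟩
        intro y hy
        rw [compress_head?] at hy
        simp at hy
        subst hy
        exact hR

end Compress

section Reduce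

/-- "No `a b a` pattern" characterization of reducedness. -/
theorem isReduced_iff (l : List V) :
    IsReduced l ↔ ∀ (p s : List V) (u v : V), l ≠ p ++ [u, v, u] ++ s := by
  constructor
  · intro h p s u v hl
    exact h (p ++ [u] ++ s) ⟨p, s, u, v, hl, rfl⟩
  · rintro h r ⟨p, s, u, v, hl, -⟩
    exact h p s u v hl

/-- One step of the stack-based normalizer. -/
def tstep : List V → V → List V
  | y :: x :: r, c => if c = x then x :: r else c :: y :: x :: r
  | σ, c => c :: σ

def normAux (σ : List V) (l : List V) : List V := l.foldl tstep σ

/-- The stack-based normal form. -/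
def norm (l : List V) : List V := (normAux [] l).reverse

/-- "the stack has no `a b a` pattern". -/
def NR (σ : List V) : Prop := ∀ (p s : List V) (u v : V), σ ≠ p ++ [u, v, u] ++ s

theorem NR.suffix {σ τ : List V} (h : NR σ) (hs : τ <:+ σ) : NR τ := by
  rintro p s u v rfl
  obtain ⟨q, rfl⟩ := hs
  exact h (q ++ p) s u v (by simp)

theorem nr_nil : NR ([] : List V) := by rintro p s u v h; simp at h
theorem nr_singleton (a : V) : NR [a] := by
  rintro p s u v h
  have := congrArg List.length h
  simp at this; omega
theorem nr_pair (a b : V) : NR [a, b] := by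
  rintro p s u v h
  have := congrArg List.length h
  simp at this; omega

theorem nr_tstep {σ : List V} (h : NR σ) (c : V) : NR (tstep σ c) := by
  match σ with
  | [] => exact nr_singleton c
  | [a] =>
    show NR [c, a]
    exact nr_pair c a
  | y :: x :: r =>
    rw [show tstep (y :: x :: r) c = if c = x then x :: r else c :: y :: x :: r from rfl]
    split
    · exact h.suffix ⟨[y], rfl⟩
    · next hne =>
      rintro p s u v hl
      cases p with
      | nil =>
        simp at hl
        obtain ⟨rfl, rfl, rfl, -⟩ := hl
        exact hne rfl
      | cons p0 p' =>
        simp at hl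
        exact h p' s u v (by simpa using hl.2)

theorem nr_normAux {σ : List V} (h : NR σ) (l : List V) : NR (normAux σ l) := by
  induction l generalizing σ with
  | nil => exact h
  | cons c l ih => exact ih (nr_tstep h c)

theorem tstep_head (σ : List V) (c : V) : ∃ ρ, tstep σ c = c :: ρ := by
  match σ with
  | [] => exact ⟨[], rfl⟩
  | [a] => exact ⟨[a], rfl⟩
  | y :: x :: r =>
    rw [show tstep (y :: x :: r) c = if c = x then x :: r else c :: y :: x :: r from rfl]
    split
    · next hcx => exact ⟨r, by rw [hcx]⟩
    · exact ⟨y :: x :: r, rfl⟩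

/-- The key local-confluence computation for the stack machine. -/
theorem tstep3 {σ : List V} (h : NR σ) (u v : V) :
    tstep (tstep (tstep σ u) v) u = tstep σ u := by
  obtain ⟨ρ, h1⟩ := tstep_head σ u
  have hnr1 : NR (tstep σ u) := nr_tstep h u
  rw [h1] at hnr1 ⊢
  match ρ with
  | [] =>
    rw [show tstep [u] v = [v, u] from rfl]
    show (if u = u then u :: ([] : List V) else u :: v :: u :: []) = [u]
    rw [if_pos rfl]
  | [x] =>
    show tstep (tstep [u, x] v) u = [u, x]
    rw [show tstep [u, x] v = if v = x then x :: [] else v :: u :: x :: [] from rfl]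
    split
    · next hvx =>
      subst hvx
      rfl
    · show (if u = u then u :: [x] else [u, v, u, x]) = [u, x]
      rw [if_pos rfl]
  | x :: w :: r =>
    rw [show tstep (u :: x :: w :: r) v = if v = x then x :: w :: r else v :: u :: x :: w :: r
        from rfl]
    split
    · next hvx =>
      subst hvx
      show (if u = w then w :: r else u :: v :: w :: r) = u :: v :: w :: r
      rw [if_neg]
      intro huw
      subst huw
      exact hnr1 [] r u v rfl
    · show (if u = u then u :: x :: w :: r else _) = u :: x :: w :: r
      rw [if_pos rfl]

theorem normAux_append (σ : List V) (l₁ l₂ : List V) :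
    normAux σ (l₁ ++ l₂) = normAux (normAux σ l₁) l₂ := by
  unfold normAux; rw [List.foldl_append]

theorem norm_step {l r : List V} (h : ReduceStep l r) : norm l = norm r := by
  obtain ⟨p, s, u, v, rfl, rfl⟩ := h
  unfold norm normAux
  rw [List.foldl_append, List.foldl_append, List.foldl_append, List.foldl_append]
  have hnr : NR (List.foldl tstep [] p) := nr_normAux nr_nil p
  exact congrArg (fun σ => (List.foldl tstep σ s).reverse) (tstep3 hnr u v)

theorem rtg_norm_aux (l : List V) : ∀ σ,
    Relation.ReflTransGen ReduceStep (σ.reverse ++ l) ((normAux σ l).reverse) := by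
  induction l with
  | nil => intro σ; rw [List.append_nil]; exact Relation.ReflTransGen.refl
  | cons c l ih =>
    intro σ
    rw [show normAux σ (c :: l) = normAux (tstep σ c) l from rfl]
    refine Relation.ReflTransGen.trans ?_ (ih (tstep σ c))
    match σ with
    | [] =>
      rw [show tstep ([] : List V) c = [c] from rfl,
        show (([c] : List V).reverse ++ l) = ([] : List V).reverse ++ c :: l by simp]
    | [a] =>
      rw [show tstep [a] c = [c, a] from rfl,
        show (([c, a] : List V).reverse ++ l) = [a].reverse ++ c :: l by simp]
    | y :: x :: r =>
      rw [show tstep (y :: x :: r) c = if c = x then x :: r else c :: y :: x :: r from rfl]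
      split
      · next hcx =>
        subst hcx
        refine Relation.ReflTransGen.single ⟨r.reverse, l, c, y, ?_, ?_⟩ <;> simp
      · rw [show ((c :: y :: x :: r).reverse ++ l) = (y :: x :: r).reverse ++ c :: l by simp]

theorem rtg_norm (l : List V) : Relation.ReflTransGen ReduceStep l (norm l) := by
  have := rtg_norm_aux l []
  simpa [norm] using this

theorem nr_reverse {σ : List V} (h : NR σ) : NR σ.reverse := by
  rintro p s u v hl
  exact h s.reverse p.reverse u v (by
    have := congrArg List.reverse hl
    simpa using this)

theorem isReduced_norm (l : List V) : IsReduced (norm l) := by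
  rw [isReduced_iff]
  exact nr_reverse (nr_normAux nr_nil l)

theorem normAux_of_nr (l : List V) : ∀ σ, NR (σ.reverse ++ l) →
    normAux σ l = l.reverse ++ σ := by
  induction l with
  | nil => intro σ _; simp [normAux]
  | cons c l ih =>
    intro σ h
    have hstep : tstep σ c = c :: σ := by
      match σ with
      | [] => rfl
      | [a] => rfl
      | y :: x :: r =>
        rw [show tstep (y :: x :: r) c = if c = x then x :: r else c :: y :: x :: r from rfl]
        rw [if_neg]
        intro hcx
        subst hcx
        exact h r.reverse l c y (by simp)
    show normAux (tstep σ c) l = (c :: l).reverse ++ σ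
    rw [hstep, ih (c :: σ) (by simpa using h)]
    simp

theorem norm_of_isReduced {l : List V} (h : IsReduced l) : norm l = l := by
  rw [isReduced_iff] at h
  have : NR l := h
  unfold norm
  rw [normAux_of_nr l [] (by simpa using this)]
  simp

theorem norm_congr {l r : List V} (h : Relation.ReflTransGen ReduceStep l r) :
    norm l = norm r := by
  induction h with
  | refl => rfl
  | tail _ hstep ih => rw [ih, norm_step hstep]

theorem reduce_eq_norm (l : List V) : reduce l = norm l := by
  unfold reduce
  have hex : ∃ r, Relation.ReflTransGen ReduceStep l r ∧ IsReduced r :=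
    ⟨norm l, rtg_norm l, isReduced_norm l⟩
  rw [dif_pos hex]
  obtain ⟨h1, h2⟩ := hex.choose_spec
  rw [← norm_of_isReduced h2, norm_congr h1]

theorem reduce_isReduced (l : List V) : IsReduced (reduce l) := by
  rw [reduce_eq_norm]; exact isReduced_norm l

theorem rtg_reduce (l : List V) : Relation.ReflTransGen ReduceStep l (reduce l) := by
  rw [reduce_eq_norm]; exact rtg_norm l

theorem reduce_of_isReduced {l : List V} (h : IsReduced l) : reduce l = l := by
  rw [reduce_eq_norm]; exact norm_of_isReduced h

theorem reduce_congr {l r : List V} (h : Relation.ReflTransGen ReduceStep l r) :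
    reduce l = reduce r := by
  rw [reduce_eq_norm, reduce_eq_norm]; exact norm_congr h

end Reduce

section CompressStep

/-- The key step lemma: compressing `X ++ [u,v,u] ++ Y` reduces in one step to
compressing `X ++ [u] ++ Y`, when `u ≠ v`. -/
theorem compress_reduceStep (X Y : List V) {u v : V} (h : u ≠ v) :
    ReduceStep (compress (X ++ [u, v, u] ++ Y)) (compress (X ++ [u] ++ Y)) := by
  have e1 : X ++ [u, v, u] ++ Y = X ++ u :: (v :: u :: Y) := by simp
  have e2 : X ++ [u] ++ Y = X ++ u :: Y := by simp
  rw [e1, e2, compress_split X (v :: u :: Y) u, compress_split X Y u]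
  have e3 : compress (u :: v :: u :: Y) = u :: v :: compress (u :: Y) := by
    rw [compress_cons_cons, if_neg h, compress_cons_cons, if_neg (Ne.symm h)]
  rw [e3]
  set D := compress (X ++ [u]) with hD
  set T := (compress (u :: Y)).tail with hT
  have hDne : D ≠ [] := compress_ne_nil (by simp)
  have hDlast : D.getLast hDne = u := by
    have h1 : D.getLast? = some u := by
      rw [hD, compress_getLast?, List.getLast?_concat]
    rw [List.getLast?_eq_getLast_of_ne_nil hDne] at h1
    exact Option.some_injective _ h1
  have hDsplit : D = D.dropLast ++ [u] := by
    conv_lhs => rw [← List.dropLast_append_getLast hDne, hDlast]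
  have hcY : compress (u :: Y) = u :: T := compress_cons_self u Y
  refine ⟨D.dropLast, T, u, v, ?_, ?_⟩
  · rw [hcY]
    show D ++ v :: u :: T = _
    rw [hDsplit]
    simp
  · show D ++ T = _
    rw [hDsplit]
    simp

end CompressStep

section Subdiv

variable {S : Type*} {G : SimpleGraph V} {d : ℕ} {Gs : SimpleGraph (V ⊕ S)}

/-- Bundled subdivision data. -/
structure SD (G : SimpleGraph V) (d : ℕ) (Gs : SimpleGraph (V ⊕ S)) where
  P : G.Dart → Fin (d + 1) → V ⊕ S
  h0 : ∀ e, P e 0 = Sum.inl e.toProd.1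
  hlast : ∀ e, P e (Fin.last d) = Sum.inl e.toProd.2
  hint : ∀ e (i : Fin (d + 1)), 0 < i.val → i.val < d → ∃ s : S, P e i = Sum.inr s
  hsymm : ∀ e (i : Fin (d + 1)), P e.symm i = P e i.rev
  huniq : ∀ e e' (i i' : Fin (d + 1)), 0 < i.val → i.val < d → P e i = P e' i' →
      (e' = e ∧ i' = i) ∨ (e' = e.symm ∧ i' = i.rev)
  hadj : ∀ a b, Gs.Adj a b ↔ ∃ e, ∃ i : Fin d, P e i.castSucc = a ∧ P e i.succ = b

noncomputable def IsEvenSubdivision.sd (h : IsEvenSubdivision G d Gs) : SD G d Gs :=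
  ⟨h.choose, h.choose_spec.1, h.choose_spec.2.1, h.choose_spec.2.2.1,
    h.choose_spec.2.2.2.2.1, h.choose_spec.2.2.2.2.2.2.1, h.choose_spec.2.2.2.2.2.2.2⟩

theorem SD.adj_inl (D : SD G d Gs) (hd : 2 ≤ d) {a : V} {y : V ⊕ S} (h : Gs.Adj (Sum.inl a) y) :
    ∃ e : G.Dart, a = e.toProd.1 ∧ y = D.P e ⟨1, by omega⟩ := by
  obtain ⟨e, i, h1, h2⟩ := (D.hadj _ _).mp h
  have hi0 : i.val = 0 := by
    by_contra h0
    obtain ⟨s, hs⟩ := D.hint e i.castSucc (by simp; omega) (by simp [i.isLt])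
    rw [hs] at h1
    exact nomatch h1
  have hcs : i.castSucc = 0 := Fin.ext (by simp [hi0])
  rw [hcs, D.h0] at h1
  refine ⟨e, Sum.inl_injective h1.symm, ?_⟩
  rw [← h2]
  congr 1
  exact Fin.ext (by simp [Fin.val_succ, hi0])

theorem SD.not_adj_inl_inl (D : SD G d Gs) (hd : 2 ≤ d) {a b : V} : ¬ Gs.Adj (Sum.inl a) (Sum.inl b) := by
  intro h
  obtain ⟨e, _, hy⟩ := D.adj_inl hd h
  obtain ⟨s, hs⟩ := D.hint e ⟨1, by omega⟩ (by simp) (by simp; omega)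
  rw [hs] at hy
  exact nomatch hy

theorem SD.adj_interior (D : SD G d Gs) {e : G.Dart} {j : Fin (d + 1)} {y : V ⊕ S}
    (hj0 : 0 < j.val) (hjd : j.val < d) (h : Gs.Adj (D.P e j) y) :
    ∃ j' : Fin (d + 1), (j'.val = j.val - 1 ∨ j'.val = j.val + 1) ∧ y = D.P e j' := by
  obtain ⟨e', i, h1, h2⟩ := (D.hadj _ _).mp h
  rcases D.huniq e e' j i.castSucc hj0 hjd h1.symm with ⟨rfl, hcs⟩ | ⟨he, hcs⟩
  · refine ⟨i.succ, Or.inr ?_, h2.symm⟩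
    have hiv : i.val = j.val := by simpa using congrArg Fin.val hcs
    simp [Fin.val_succ, hiv]
  · subst he
    have hiv : i.val = d - j.val := by
      have := congrArg Fin.val hcs
      simp [Fin.val_rev] at this
      omega
    refine ⟨(i.succ).rev, Or.inl ?_, ?_⟩
    · simp [Fin.val_rev, Fin.val_succ]
      omega
    · rw [← h2, D.hsymm]

theorem SD.walk_lemma (D : SD G d Gs) (hd : 2 ≤ d) :
    ∀ (l : List (V ⊕ S)) (e : G.Dart) (j : Fin (d + 1)), 0 < j.val → j.val < d →
    List.Chain' Gs.Adj (D.P e j :: l) → ∀ c, (l.filterMap Sum.getLeft?).head? = some c →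
    c = e.toProd.1 ∨ c = e.toProd.2 := by
  intro l
  induction l with
  | nil => intro e j _ _ _ c hc; simp at hc
  | cons y l ih =>
    intro e j hj0 hjd hch c hc
    have hadj : Gs.Adj (D.P e j) y := (List.chain'_cons.mp hch).1
    obtain ⟨j', hj', hy⟩ := D.adj_interior hj0 hjd hadj
    subst hy
    by_cases h0 : j'.val = 0
    · have : j' = 0 := Fin.ext (by simp [h0])
      rw [this, D.h0] at hc
      rw [List.filterMap_cons] at hc
      simp only [Sum.getLeft?] at hc
      rw [List.head?_cons] at hc
      left
      exact (Option.some_injective _ hc).symm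
    · by_cases hD : j'.val = d
      · have : j' = Fin.last d := Fin.ext (by simp [hD])
        rw [this, D.hlast] at hc
        rw [List.filterMap_cons] at hc
        simp only [Sum.getLeft?] at hc
        rw [List.head?_cons] at hc
        right
        exact (Option.some_injective _ hc).symm
      · have hj'0 : 0 < j'.val := by omega
        have hj'd : j'.val < d := by
          rcases hj' with h | h <;> omega
        obtain ⟨s, hs⟩ := D.hint e j' hj'0 hj'd
        rw [hs] at hc
        rw [List.filterMap_cons] at hc
        simp only [Sum.getLeft?] at hc
        exact ih e j' hj'0 hj'd ((List.chain'_cons.mp hch).2) c hc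

theorem SD.head_rel (D : SD G d Gs) (hd : 2 ≤ d) {a : V} {m : List (V ⊕ S)}
    (hch : List.Chain' Gs.Adj (Sum.inl a :: m)) {c : V}
    (hc : (m.filterMap Sum.getLeft?).head? = some c) :
    a = c ∨ G.Adj a c := by
  cases m with
  | nil => simp at hc
  | cons y m' =>
    have hadj : Gs.Adj (Sum.inl a) y := (List.chain'_cons.mp hch).1
    obtain ⟨e, ha, hy⟩ := D.adj_inl hd hadj
    obtain ⟨s, hs⟩ := D.hint e ⟨1, by omega⟩ (by simp) (by simp; omega)
    have hfc : (m'.filterMap Sum.getLeft?).head? = some c := by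
      rw [hy, hs, List.filterMap_cons] at hc
      simpa only [Sum.getLeft?] using hc
    have hch' : List.Chain' Gs.Adj (D.P e ⟨1, by omega⟩ :: m') := by
      rw [← hy]
      exact (List.chain'_cons.mp hch).2
    rcases D.walk_lemma hd m' e ⟨1, by omega⟩ (by simp) (by simp; omega) hch' c hfc with h | h
    · left; rw [ha, h]
    · right; rw [ha, h]; exact e.adj

theorem SD.chain_filterMap (D : SD G d Gs) (hd : 2 ≤ d) {m : List (V ⊕ S)} (hch : List.Chain' Gs.Adj m) :
    List.Chain' (fun a c : V => a = c ∨ G.Adj a c) (m.filterMap Sum.getLeft?) := by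
  induction m with
  | nil => simp
  | cons a m ih =>
    cases a with
    | inr s =>
      rw [List.filterMap_cons]
      simpa only [Sum.getLeft?] using ih hch.tail
    | inl a =>
      rw [List.filterMap_cons]
      simp only [Sum.getLeft?]
      rw [List.chain'_cons']
      refine ⟨fun c hc => D.head_rel hd hch hc, ih hch.tail⟩

end Subdiv

section LoopWord

variable {G : SimpleGraph V} {x : V}

theorem IsLoopWord.reduceStep {w w' : List V} (h : IsLoopWord G x w)
    (hs : ReduceStep w w') : IsLoopWord G x w' := by
  obtain ⟨p, s, u, v, rfl, rfl⟩ := hs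
  obtain ⟨hch, hhd, hlast⟩ := h
  rw [List.append_assoc] at hch ⊢
  rw [List.chain'_append] at hch
  obtain ⟨hp, hmid, hcross⟩ := hch
  refine ⟨?_, ?_, ?_⟩
  · rw [List.chain'_append]
    refine ⟨hp, ?_, ?_⟩
    · have : ([u, v, u] ++ s : List V) = u :: v :: u :: s := rfl
      rw [this] at hmid
      have h1 := (List.chain'_cons.mp hmid).2
      have h2 := (List.chain'_cons.mp h1).2
      exact h2
    · intro a ha b hb
      refine hcross a ha b ?_
      simpa using hb
  · simpa using hhd
  · simpa using hlast

end LoopWord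

end Aux

namespace GraphTower

variable (T : GraphTower)

theorem phi_eq (n : ℕ) (w : List (T.V (n + 1))) :
    T.phi n w = compress (List.filterMap Sum.getLeft? (w.map (T.f n))) := by
  unfold phi DRC
  rw [List.filterMap_map]
  rfl

theorem phi_isLoopWord {n : ℕ} {w : List (T.V (n + 1))}
    (h : IsLoopWord (T.G (n + 1)) (T.x (n + 1)) w) :
    IsLoopWord (T.G n) (T.x n) (T.phi n w) := by
  obtain ⟨hch, hhd, hlast⟩ := h
  have hd := T.two_le_d n
  have hmap : List.Chain' (T.Gs n).Adj (w.map (T.f n)) :=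
    List.chain'_map_of_chain' _ (fun a b hab => T.f_simplicial n hab) hch
  refine ⟨?_, ?_, ?_⟩
  · rw [phi_eq]
    exact compress_chain ((T.subdiv n).sd.chain_filterMap hd hmap)
  · rw [phi_eq, compress_head?]
    cases w with
    | nil => simp at hhd
    | cons a t =>
      rw [List.head?_cons] at hhd
      have : a = T.x (n + 1) := by injection hhd
      subst this
      rw [List.map_cons, List.filterMap_cons, T.f_base n]
      rfl
  · rw [phi_eq, compress_getLast?]
    have hw : w.dropLast ++ [T.x (n + 1)] = w :=
      List.dropLast_append_getLast? _ hlast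
    rw [← hw, List.map_append, List.filterMap_append, List.map_cons, List.filterMap_cons,
      T.f_base n]
    simp

theorem proj_isLoopWord (m n : ℕ) :
    ∀ (w : List (T.V (n + m))), IsLoopWord (T.G (n + m)) (T.x (n + m)) w →
    IsLoopWord (T.G n) (T.x n) (T.proj n m w) := by
  induction m with
  | zero => intro w h; exact h
  | succ m ih => intro w h; exact ih _ (T.phi_isLoopWord h)

/-- The key invariance: one reduction step upstairs does not change the
reduction of the projected word. -/
theorem reduce_phi_step {n : ℕ} {w w' : List (T.V (n + 1))}
    (h : IsLoopWord (T.G (n + 1)) (T.x (n + 1)) w) (hs : ReduceStep w w') :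
    reduce (T.phi n w) = reduce (T.phi n w') := by
  obtain ⟨p, s, u, v, rfl, rfl⟩ := hs
  obtain ⟨hch, hhd, hlast⟩ := h
  set D := (T.subdiv n).sd with hDdef
  have hd := T.two_le_d n
  have huv : (T.G (n + 1)).Adj u v := by
    have : List.Chain' (T.G (n + 1)).Adj [u, v, u] := hch.infix ⟨p, s, rfl⟩
    exact (List.chain'_cons.mp this).1
  rw [phi_eq, phi_eq, List.map_append, List.map_append, List.map_append, List.map_append,
    List.filterMap_append, List.filterMap_append, List.filterMap_append, List.filterMap_append]
  set A := List.filterMap Sum.getLeft? (p.map (T.f n)) with hA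
  set C := List.filterMap Sum.getLeft? (s.map (T.f n)) with hC
  have hGs : (T.Gs n).Adj (T.f n u) (T.f n v) := T.f_simplicial n huv
  cases hfu : T.f n u with
  | inl a =>
    cases hfv : T.f n v with
    | inl b =>
      exfalso
      rw [hfu, hfv] at hGs
      exact D.not_adj_inl_inl hd hGs
    | inr t =>
      have m1 : List.filterMap Sum.getLeft? (List.map (T.f n) [u, v, u]) = [a, a] := by
        simp [hfu, hfv, Sum.getLeft?, List.filterMap_cons]
      have m2 : List.filterMap Sum.getLeft? (List.map (T.f n) [u]) = [a] := by
        simp [hfu, Sum.getLeft?]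
      rw [m1, m2]
      have e1 : A ++ [a, a] ++ C = A ++ a :: a :: C := by simp
      have e2 : A ++ [a] ++ C = A ++ a :: C := by simp
      rw [e1, e2, compress_dup]
  | inr t =>
    cases hfv : T.f n v with
    | inr t' =>
      have m1 : List.filterMap Sum.getLeft? (List.map (T.f n) [u, v, u]) = [] := by
        simp [hfu, hfv]
      have m2 : List.filterMap Sum.getLeft? (List.map (T.f n) [u]) = [] := by
        simp [hfu]
      rw [m1, m2]
    | inl b =>
      have m1 : List.filterMap Sum.getLeft? (List.map (T.f n) [u, v, u]) = [b] := by
        simp [hfu, hfv, Sum.getLeft?, List.filterMap_cons]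
      have m2 : List.filterMap Sum.getLeft? (List.map (T.f n) [u]) = [] := by
        simp [hfu, Sum.getLeft?]
      rw [m1, m2]
      -- set up the dart
      rw [hfu, hfv] at hGs
      obtain ⟨e, hb, ht⟩ := D.adj_inl hd hGs.symm
      -- p and s are nonempty and bounded by base points
      have hpne : p ≠ [] := by
        rintro rfl
        have : u = T.x (n + 1) := by simpa using hhd
        rw [this, T.f_base n] at hfu
        exact nomatch hfu
      have hsne : s ≠ [] := by
        rintro rfl
        have : u = T.x (n + 1) := by simpa using hlast
        rw [this, T.f_base n] at hfu
        exact nomatch hfu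
      -- A is nonempty
      have hAne : A ≠ [] := by
        cases p with
        | nil => exact absurd rfl hpne
        | cons a' t' =>
          have ha' : a' = T.x (n + 1) := by simpa using hhd
          subst ha'
          rw [hA, List.map_cons, List.filterMap_cons, T.f_base n]
          simp
      -- C is nonempty
      have hslast : s.getLast? = some (T.x (n + 1)) := by
        rw [List.getLast?_append] at hlast
        cases hsl : s.getLast? with
        | none => exact absurd (List.getLast?_eq_none_iff.mp hsl) hsne
        | some z =>
          rw [hsl] at hlast
          have hz : z = T.x (n + 1) := by simpa using hlast
          rw [hz]
      have hCne : C ≠ [] := by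
        have hw : s.dropLast ++ [T.x (n + 1)] = s :=
          List.dropLast_append_getLast? _ hslast
        rw [hC, ← hw, List.map_append, List.filterMap_append, List.map_cons,
          List.filterMap_cons, T.f_base n]
        simp
      -- walk analysis: the last letter of A
      have hchainp : List.Chain' (T.Gs n).Adj (D.P e ⟨1, by omega⟩ :: (p.map (T.f n)).reverse) := by
        have h1 : List.Chain' (T.G (n + 1)).Adj (p ++ [u]) :=
          hch.prefix ⟨[v, u] ++ s, by simp⟩
        have h2 : List.Chain' (T.Gs n).Adj ((p ++ [u]).map (T.f n)) :=
          List.chain'_map_of_chain' _ (fun a b hab => T.f_simplicial n hab) h1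
        have h3 : List.Chain' (flip (T.Gs n).Adj) ((p ++ [u]).map (T.f n)) :=
          h2.imp (fun a b hab => hab.symm)
        have h4 := List.chain'_reverse.mpr h3
        have h5 : ((p ++ [u]).map (T.f n)).reverse
            = T.f n u :: (p.map (T.f n)).reverse := by simp
        rw [h5, hfu, ht] at h4
        exact h4
      have hchains : List.Chain' (T.Gs n).Adj (D.P e ⟨1, by omega⟩ :: s.map (T.f n)) := by
        have h1 : List.Chain' (T.G (n + 1)).Adj (u :: s) :=
          hch.suffix ⟨p ++ [u, v], by simp⟩
        have h2 := List.chain'_map_of_chain' (T.f n)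
          (fun a b hab => T.f_simplicial n hab) h1
        rw [List.map_cons, hfu, ht] at h2
        exact h2
      -- the last letter of A is an endpoint of e
      have haA : A.getLast hAne = e.toProd.1 ∨ A.getLast hAne = e.toProd.2 := by
        apply D.walk_lemma hd ((p.map (T.f n)).reverse) e ⟨1, by omega⟩ (by simp)
          (by simp; omega) hchainp
        rw [List.filterMap_reverse, List.head?_reverse, ← hA]
        exact (List.getLast?_eq_getLast_of_ne_nil hAne)
      have hcC : C.head hCne = e.toProd.1 ∨ C.head hCne = e.toProd.2 := by
        apply D.walk_lemma hd (s.map (T.f n)) e ⟨1, by omega⟩ (by simp)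
          (by simp; omega) hchains
        rw [← hC]
        exact (List.head?_eq_head hCne)
      -- decompositions
      have hAdec : A = A.dropLast ++ [A.getLast hAne] := (List.dropLast_append_getLast hAne).symm
      have hCdec : C = C.head hCne :: C.tail := (List.cons_head_tail hCne).symm
      have hbe : b = e.toProd.1 := hb
      have hne : e.toProd.1 ≠ e.toProd.2 := e.adj.ne
      rcases haA with ha | ha
      · -- last of A is b : duplicate absorption
        have e1 : A ++ [b] ++ C = A.dropLast ++ b :: b :: C := by
          conv_lhs => rw [hAdec]
          rw [ha, ← hbe]
          simp
        have e2 : A ++ [] ++ C = A.dropLast ++ b :: C := by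
          conv_lhs => rw [hAdec]
          rw [ha, ← hbe]
          simp
        rw [e1, e2, compress_dup]
      · rcases hcC with hc | hc
        · -- head of C is b
          have e1 : A ++ [b] ++ C = A ++ b :: b :: C.tail := by
            conv_lhs => rw [hCdec]
            rw [hc, ← hbe]
            simp
          have e2 : A ++ [] ++ C = A ++ b :: C.tail := by
            conv_lhs => rw [hCdec]
            rw [hc, ← hbe]
            simp
          rw [e1, e2, compress_dup]
        · -- both neighbours are the other endpoint : a genuine reduction step
          have e1 : A ++ [b] ++ C = A.dropLast ++ [e.toProd.2, b, e.toProd.2] ++ C.tail := by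
            conv_lhs => rw [hAdec, hCdec]
            rw [ha, hc]
            simp
          have e2 : A ++ [] ++ C = A.dropLast ++ e.toProd.2 :: e.toProd.2 :: C.tail := by
            conv_lhs => rw [hAdec, hCdec]
            rw [ha, hc]
            simp
          rw [e1, e2, compress_dup]
          apply reduce_congr
          apply Relation.ReflTransGen.single
          have := compress_reduceStep A.dropLast C.tail
            (show e.toProd.2 ≠ b from by rw [hbe]; exact fun hh => hne hh.symm)
          have e3 : A.dropLast ++ [e.toProd.2] ++ C.tail
              = A.dropLast ++ e.toProd.2 :: C.tail := by simp
          rw [← e3]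
          exact this

theorem reduce_phi_rtg {n : ℕ} {w w' : List (T.V (n + 1))}
    (h : IsLoopWord (T.G (n + 1)) (T.x (n + 1)) w)
    (hs : Relation.ReflTransGen ReduceStep w w') :
    IsLoopWord (T.G (n + 1)) (T.x (n + 1)) w' ∧ reduce (T.phi n w) = reduce (T.phi n w') := by
  induction hs with
  | refl => exact ⟨h, rfl⟩
  | tail _ hstep ih =>
    exact ⟨ih.1.reduceStep hstep, ih.2.trans (T.reduce_phi_step ih.1 hstep)⟩

theorem reduce_phi_reduce {n : ℕ} {w : List (T.V (n + 1))}
    (h : IsLoopWord (T.G (n + 1)) (T.x (n + 1)) w) :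
    reduce (T.phi n w) = reduce (T.phi n (reduce w)) :=
  (T.reduce_phi_rtg h (rtg_reduce w)).2

theorem reduce_proj {g : ∀ n, List (T.V n)} (hg : T.MemG g) (m n : ℕ) :
    ∀ (w : List (T.V (n + m))), IsLoopWord (T.G (n + m)) (T.x (n + m)) w →
    reduce w = g (n + m) → reduce (T.proj n m w) = g n := by
  induction m with
  | zero => intro w _ hr; exact hr
  | succ m ih =>
    intro w h hr
    show reduce (T.proj n m (T.phi (n + m) w)) = g n
    refine ih (T.phi (n + m) w) (T.phi_isLoopWord h) ?_
    have h1 : reduce (T.phi (n + m) w) = reduce (T.phi (n + m) (reduce w)) :=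
      T.reduce_phi_reduce h
    rw [h1, hr]
    exact hg.2 (n + m)

/-- Transport of words along an equality of levels. -/
def castL {a b : ℕ} (h : a = b) (w : List (T.V a)) : List (T.V b) := h ▸ w

theorem castL_seq {a b : ℕ} (h : a = b) (g : ∀ n, List (T.V n)) :
    T.castL h (g a) = g b := by subst h; rfl

theorem castL_phi {a b : ℕ} (h : a = b) (w : List (T.V (a + 1))) :
    T.phi b (T.castL (congrArg Nat.succ h) w) = T.castL h (T.phi a w) := by
  subst h; rfl

theorem phi_proj (m : ℕ) : ∀ (n : ℕ) (h : n + 1 + m = n + (m + 1)) (w : List (T.V (n + 1 + m))),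
    T.phi n (T.proj (n + 1) m w) = T.proj n (m + 1) (T.castL h w) := by
  induction m with
  | zero =>
    intro n h w
    rfl
  | succ m ih =>
    intro n h w
    show T.phi n (T.proj (n + 1) m (T.phi (n + 1 + m) w))
        = T.proj n (m + 1) (T.phi (n + (m + 1)) (T.castL h w))
    rw [ih n (by omega) (T.phi (n + 1 + m) w)]
    congr 1
    exact (T.castL_phi (show n + 1 + m = n + (m + 1) by omega) w).symm

end GraphTower

open GraphTower in
theorem statement_4_part2 (T : GraphTower) {g : ∀ n, List (T.V n)} (hg : T.MemG g)
    {ω : ∀ n, List (T.V n)} (hst : T.IsStabilization g ω) :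
    T.MemOmega ω ∧ ∀ n, reduce (ω n) = g n := by
  have hloop : ∀ n, IsLoopWord (T.G n) (T.x n) (g n) := fun n => (hg.1 n).1
  have hred : ∀ n, reduce (ω n) = g n := by
    intro n
    obtain ⟨M, hM⟩ := hst n
    rw [← hM M le_rfl]
    exact T.reduce_proj hg M n (g (n + M)) (hloop (n + M))
      (reduce_of_isReduced (hg.1 (n + M)).2)
  refine ⟨⟨?_, ?_⟩, hred⟩
  · intro n
    obtain ⟨M, hM⟩ := hst n
    rw [← hM M le_rfl]
    exact T.proj_isLoopWord M n _ (hloop (n + M))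
  · intro n
    obtain ⟨M0, hM0⟩ := hst n
    obtain ⟨M1, hM1⟩ := hst (n + 1)
    set m := max M0 M1 with hm
    have e1 : ω (n + 1) = T.proj (n + 1) m (g (n + 1 + m)) := (hM1 m (le_max_right _ _)).symm
    have e0 : T.proj n (m + 1) (g (n + (m + 1))) = ω n := hM0 (m + 1) (by omega)
    rw [e1, T.phi_proj m n (by omega) (g (n + 1 + m)), T.castL_seq (by omega) g]
    exact e0


/-- For every locally eventually constant `(g_n)_n ∈ 𝒢` the
stabilization `←(g_n)_n` exists, belongs to `Ω`, and its termwise reduction is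
`(g_n)_n` again; moreover, for every `ω ∈ ←𝒢`, the stabilization of the termwise
reduction of `ω` is `ω` itself.  Hence stabilization `𝒢 → ←𝒢` and termwise
reduction `←𝒢 → 𝒢` are mutually inverse bijections. -/
theorem statement_4 (T : GraphTower) :
    (∀ g, T.MemG g → T.LEC g → ∃ ω, T.IsStabilization g ω) ∧
    (∀ g, T.MemG g → T.LEC g → ∀ ω, T.IsStabilization g ω →
      T.MemOmega ω ∧ ∀ n, reduce (ω n) = g n) ∧
    (∀ ω, (∃ g, T.MemG g ∧ T.LEC g ∧ T.IsStabilization g ω) →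
      T.IsStabilization (fun n => reduce (ω n)) ω) := by
  refine ⟨?_, ?_, ?_⟩
  · intro g _ hlec
    choose M hM using hlec
    exact ⟨fun n => T.proj n (M n) (g (n + M n)), fun n => ⟨M n, hM n⟩⟩
  · intro g hg _ ω hst
    exact statement_4_part2 T hg hst
  · rintro ω ⟨g, hg, _, hst⟩
    have h2 := (statement_4_part2 T hg hst).2
    intro n
    obtain ⟨M, hM⟩ := hst n
    refine ⟨M, fun m hm => ?_⟩
    show T.proj n m (reduce (ω (n + m))) = ω n
    rw [h2 (n + m)]
    exact hM m hm

end GCG
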